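/- For integers p_i ≥ 0 with Σ p_i = 1 (probability weights), d_i ≥ 1, Σ p_i d_i > 1, and λ ∈ (0,1), the equation u = λ Σ_i p_i u^{d_i} has exactly one solution u_λ in (1,∞), and u_λ → 1 as λ → 1⁻. -/

import Mathlib

open Real Filter Set Finset

lemma convexOn_finset_sum {ι : Type*} (t : Finset ι) (f : ι → ℝ → ℝ)
    (h : ∀ i ∈ t, ConvexOn ℝ (Set.Ici (0:ℝ)) (f i)) :
    ConvexOn ℝ (Set.Ici (0:ℝ)) (fun u => ∑ i ∈ t, f i u) := by
  induction t using Finset.cons_induction with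
  | empty => simpa using convexOn_const 0 (convex_Ici (0:ℝ))
  | cons i t hi ih =>
      simp only [Finset.sum_cons]
      exact (h i (Finset.mem_cons_self _ _)).add
        (ih fun j hj => h j (Finset.mem_cons_of_mem hj))

lemma conv_aux {g : ℝ → ℝ} (hg : ConvexOn ℝ (Set.Ici (0:ℝ)) g) {x y : ℝ}
    (h1x : 1 < x) (hxy : x < y) (hg1 : g 1 < 0) (hgy : g y ≤ 0) : g x < 0 := by
  have hy0 : (0:ℝ) ≤ y := by linarith
  have hy1 : (0:ℝ) < y - 1 := by linarith
  set t := (y - x)/(y - 1) with ht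
  set s := (x - 1)/(y - 1) with hs
  have htpos : 0 < t := div_pos (by linarith) hy1
  have hspos : 0 < s := div_pos (by linarith) hy1
  have hts : t + s = 1 := by
    rw [ht, hs, ← add_div, div_eq_one_iff_eq hy1.ne']; ring
  have key := hg.2 (by norm_num : (1:ℝ) ∈ Set.Ici (0:ℝ)) (Set.mem_Ici.mpr hy0)
    htpos.le hspos.le hts
  have hx : t • (1:ℝ) + s • y = x := by
    rw [smul_eq_mul, smul_eq_mul, ht, hs]
    field_simp
    ring
  rw [hx] at key
  simp only [smul_eq_mul] at key
  nlinarith [mul_pos htpos (neg_pos.2 hg1), mul_nonneg hspos.le (neg_nonneg.2 hgy)]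

theorem stmt_12 (n : ℕ) (hn : 1 ≤ n)
    (p : Fin n → ℝ) (hp : ∀ i, 0 ≤ p i) (hp1 : ∑ i, p i = 1)
    (d : Fin n → ℕ) (hd : ∀ i, 1 ≤ d i) (hpd : 1 < ∑ i, p i * (d i : ℝ)) :
    (∀ l : ℝ, l ∈ Set.Ioo (0:ℝ) 1 →
      ∃! u : ℝ, u ∈ Set.Ioi (1:ℝ) ∧ u = l * ∑ i, p i * u ^ d i) ∧
    (∀ uf : ℝ → ℝ,
      (∀ l ∈ Set.Ioo (0:ℝ) 1,
        uf l ∈ Set.Ioi (1:ℝ) ∧ uf l = l * ∑ i, p i * uf l ^ d i) →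
      Filter.Tendsto uf (nhdsWithin 1 (Set.Iio 1)) (nhds 1)) := by
  have hconv : ∀ l : ℝ, 0 ≤ l →
      ConvexOn ℝ (Set.Ici (0:ℝ)) (fun u => l * ∑ i, p i * u ^ d i - u) := by
    intro l hl
    have h1 : ConvexOn ℝ (Set.Ici (0:ℝ)) (fun u => ∑ i, (l * p i) * u ^ d i) := by
      apply convexOn_finset_sum
      intro i _
      exact (convexOn_pow (d i)).smul (mul_nonneg hl (hp i))
    have h2 : ConvexOn ℝ (Set.Ici (0:ℝ)) (fun u => l * ∑ i, p i * u ^ d i) := by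
      convert h1 using 2 with u
      rw [Finset.mul_sum]
      congr 1 with i
      ring
    exact h2.sub (concaveOn_id (convex_Ici 0))
  have hbern : ∀ u : ℝ, 1 ≤ u →
      1 + (u - 1) * ∑ i, p i * (d i : ℝ) ≤ ∑ i, p i * u ^ d i := by
    intro u hu
    have hterm : ∀ i ∈ Finset.univ (α := Fin n),
        p i * (1 + (d i : ℝ) * (u - 1)) ≤ p i * u ^ d i := by
      intro i _
      apply mul_le_mul_of_nonneg_left _ (hp i)
      have := one_add_mul_le_pow (a := u - 1) (by linarith) (d i)
      simpa using this
    calc 1 + (u - 1) * ∑ i, p i * (d i : ℝ)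
        = ∑ i, p i * (1 + (d i : ℝ) * (u - 1)) := by
          rw [Finset.mul_sum,
            show ∑ i, p i * (1 + (d i : ℝ) * (u - 1))
              = ∑ i, (p i + (u - 1) * (p i * (d i : ℝ))) by congr 1 with i; ring,
            Finset.sum_add_distrib, hp1]
      _ ≤ ∑ i, p i * u ^ d i := Finset.sum_le_sum hterm
  have hr1 : ∀ l : ℝ, l * ∑ i, p i * (1:ℝ) ^ d i - 1 = l - 1 := by
    intro l; simp [hp1]
  obtain ⟨j, hj⟩ : ∃ j, p j < p j * (d j : ℝ) := by
    by_contra h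
    push_neg at h
    have : ∑ i, p i * (d i : ℝ) ≤ ∑ i, p i := Finset.sum_le_sum fun i _ => h i
    rw [hp1] at this; linarith
  have hpj : 0 < p j := by
    by_contra h
    push_neg at h
    have : p j = 0 := le_antisymm h (hp j)
    rw [this] at hj; simp at hj
  have hdj : 2 ≤ d j := by
    rcases Nat.lt_or_ge (d j) 2 with h | h
    · have hdj1 : d j = 1 := by have := hd j; omega
      rw [hdj1] at hj; simp at hj
    · exact h
  have hcont : ∀ l : ℝ, Continuous (fun u : ℝ => l * ∑ i, p i * u ^ d i - u) := by
    intro l; fun_prop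
  constructor
  · rintro l ⟨hl0, hl1⟩
    have hg1 : l * ∑ i, p i * (1:ℝ) ^ d i - 1 < 0 := by rw [hr1]; linarith
    have hc : 0 < l * p j := mul_pos hl0 hpj
    set B : ℝ := max 2 (1 / (l * p j)) with hB
    have hB2 : (2:ℝ) ≤ B := le_max_left _ _
    have hB1 : (1:ℝ) < B := by linarith
    have hBc : 1 / (l * p j) ≤ B := le_max_right _ _
    have hgB : 0 ≤ l * ∑ i, p i * B ^ d i - B := by
      have hsum : p j * B ^ d j ≤ ∑ i, p i * B ^ d i := by
        apply Finset.single_le_sum (f := fun i => p i * B ^ d i) _ (Finset.mem_univ j)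
        intro i _
        exact mul_nonneg (hp i) (pow_nonneg (by linarith) _)
      have hpow : B ^ 2 ≤ B ^ d j := pow_le_pow_right₀ (by linarith) hdj
      have h1 : l * p j * B ^ 2 ≤ l * ∑ i, p i * B ^ d i := by
        calc l * p j * B ^ 2 ≤ l * (p j * B ^ d j) := by
              rw [mul_assoc]
              exact mul_le_mul_of_nonneg_left
                (mul_le_mul_of_nonneg_left hpow hpj.le) hl0.le
          _ ≤ l * ∑ i, p i * B ^ d i := mul_le_mul_of_nonneg_left hsum hl0.le
      have h2 : B ≤ l * p j * B ^ 2 := by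
        have : 1 ≤ l * p j * B := by
          rw [div_le_iff₀ hc] at hBc
          nlinarith
        nlinarith
      linarith
    obtain ⟨u, hu_mem, hu_eq⟩ :
        ∃ u ∈ Set.Icc (1:ℝ) B, l * ∑ i, p i * u ^ d i - u = 0 := by
      have hivt := intermediate_value_Icc hB1.le
        ((hcont l).continuousOn (s := Set.Icc 1 B))
      have h0 : (0:ℝ) ∈ Set.Icc (l * ∑ i, p i * (1:ℝ) ^ d i - 1)
          (l * ∑ i, p i * B ^ d i - B) := ⟨hg1.le, hgB⟩
      obtain ⟨u, hu, hgu⟩ := hivt h0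
      exact ⟨u, hu, hgu⟩
    have hu1 : 1 < u := by
      rcases lt_or_eq_of_le hu_mem.1 with h | h
      · exact h
      · rw [← h] at hu_eq; linarith
    refine ⟨u, ⟨hu1, by linarith⟩, ?_⟩
    rintro v ⟨hv1, hveq⟩
    rw [Set.mem_Ioi] at hv1
    have hgv : l * ∑ i, p i * v ^ d i - v = 0 := by linarith
    rcases lt_trichotomy v u with h | h | h
    · have h2 : l * ∑ i, p i * v ^ d i - v < 0 :=
        conv_aux (hconv l hl0.le) hv1 h hg1 hu_eq.le
      linarith
    · exact h
    · have h2 : l * ∑ i, p i * u ^ d i - u < 0 :=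
        conv_aux (hconv l hl0.le) hu1 h hg1 hgv.le
      linarith
  · intro uf huf
    rw [Metric.tendsto_nhdsWithin_nhds]
    intro ε hε
    have hF1 : 1 + ε < ∑ i, p i * (1 + ε) ^ d i := by
      have := hbern (1 + ε) (by linarith)
      nlinarith
    have hFpos : 0 < ∑ i, p i * (1 + ε) ^ d i := by linarith
    have hratio : (1 + ε) / (∑ i, p i * (1 + ε) ^ d i) < 1 := (div_lt_one hFpos).mpr hF1
    have hratio0 : 0 < (1 + ε) / (∑ i, p i * (1 + ε) ^ d i) :=
      div_pos (by linarith) hFpos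
    refine ⟨1 - (1 + ε) / (∑ i, p i * (1 + ε) ^ d i), by linarith, ?_⟩
    intro l hl hdist
    rw [Set.mem_Iio] at hl
    rw [Real.dist_eq, abs_sub_lt_iff] at hdist
    have hlgt : (1 + ε) / (∑ i, p i * (1 + ε) ^ d i) < l := by linarith [hdist.2]
    have hl0 : 0 < l := lt_trans hratio0 hlgt
    obtain ⟨hu1, hueq⟩ := huf l ⟨hl0, hl⟩
    rw [Set.mem_Ioi] at hu1
    have hg1 : l * ∑ i, p i * (1:ℝ) ^ d i - 1 < 0 := by rw [hr1]; linarith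
    have hgu : l * ∑ i, p i * uf l ^ d i - uf l = 0 := by linarith
    have hgε : 0 < l * ∑ i, p i * (1 + ε) ^ d i - (1 + ε) := by
      rw [div_lt_iff₀ hFpos] at hlgt
      linarith
    have hlt : uf l < 1 + ε := by
      by_contra h
      push_neg at h
      rcases lt_or_eq_of_le h with h' | h'
      · have h2 : l * ∑ i, p i * (1 + ε) ^ d i - (1 + ε) < 0 :=
          conv_aux (hconv l hl0.le) (by linarith : (1:ℝ) < 1 + ε) h' hg1 hgu.le
        linarith
      · rw [h'] at hgε; linarith
    rw [Real.dist_eq, abs_sub_lt_iff]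
    constructor <;> linarith
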